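/- Let F be the 'spider' tree on n ≥ 4 vertices consisting of one center vertex of degree 3 joined to three paths whose lengths sum to n − 1. Then Σ_{uv ∈ E(F)}(d_u + d_v) = 4(n−1), and consequently the first subdivision F₁ of F (inserting one vertex on each edge) is a neutral tree on 2n − 1 vertices. -/

import Mathlib

open Finset

attribute [local instance] Classical.propDecidable

namespace Neutral

/-- Number of edges of `G`. -/
noncomputable def m {V : Type*} [Fintype V] (G : SimpleGraph V) : ℕ :=
  G.edgeFinset.card

/-- `∑_{uv ∈ E} d_u · d_v`, each edge counted once. -/
noncomputable def dd {V : Type*} [Fintype V] (G : SimpleGraph V) : ℕ :=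
  ∑ e ∈ G.edgeFinset,
    Sym2.lift ⟨fun u v => G.degree u * G.degree v, fun _ _ => Nat.mul_comm _ _⟩ e

/-- `∑_{uv ∈ E} (d_u + d_v)`, each edge counted once. -/
noncomputable def ds {V : Type*} [Fintype V] (G : SimpleGraph V) : ℕ :=
  ∑ e ∈ G.edgeFinset,
    Sym2.lift ⟨fun u v => G.degree u + G.degree v, fun _ _ => Nat.add_comm _ _⟩ e

/-- `∑_{uv ∈ E} (d_u² + d_v²)`, each edge counted once. -/
noncomputable def dsq {V : Type*} [Fintype V] (G : SimpleGraph V) : ℕ :=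
  ∑ e ∈ G.edgeFinset,
    Sym2.lift ⟨fun u v => G.degree u ^ 2 + G.degree v ^ 2, fun _ _ => Nat.add_comm _ _⟩ e

/-- A graph is irregular if it is not regular of any degree. -/
def Irregular {V : Type*} [Fintype V] (G : SimpleGraph V) : Prop :=
  ¬ ∃ k, G.IsRegularOfDegree k

end Neutral

open Neutral

namespace Neutral

/-- A chosen pair of endpoints of an unordered edge. -/
noncomputable def ends {V : Type*} (e : Sym2 V) : V × V :=
  Classical.choose (Quot.exists_rep e)

/-- One-directional adjacency used to build the `s`-th subdivision graph:
the new vertices `(e,0), …, (e,s-1)` inserted on the edge `e` form a path joining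
the two endpoints of `e`. -/
def subS {V : Type*} (G : SimpleGraph V) (s : ℕ) :
    (V ⊕ (G.edgeSet × Fin s)) → (V ⊕ (G.edgeSet × Fin s)) → Prop
  | Sum.inl u, Sum.inr (e, i) =>
      (i.val = 0 ∧ u = (ends (e : Sym2 V)).1) ∨ (i.val = s - 1 ∧ u = (ends (e : Sym2 V)).2)
  | Sum.inr (e, i), Sum.inr (f, j) => e = f ∧ i.val + 1 = j.val
  | _, _ => False

/-- The `s`-th subdivision graph `G_s`: every edge of `G` is subdivided by `s` new
vertices. -/
noncomputable def Subdiv {V : Type*} (G : SimpleGraph V) (s : ℕ) :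
    SimpleGraph (V ⊕ (G.edgeSet × Fin s)) where
  Adj x y := x ≠ y ∧ (subS G s x y ∨ subS G s y x)
  symm := ⟨fun _ _ h => ⟨Ne.symm h.1, h.2.symm⟩⟩
  loopless := ⟨fun _ h => h.1 rfl⟩

end Neutral


open Neutral SimpleGraph

namespace Aux17

variable {V : Type*}

lemma mk_ends (e : Sym2 V) : s((ends e).1, (ends e).2) = e :=
  Classical.choose_spec (Quot.exists_rep e)

variable (F : SimpleGraph V)

lemma ends_adj (ε : F.edgeSet) : F.Adj (ends (ε : Sym2 V)).1 (ends (ε : Sym2 V)).2 := by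
  have h := ε.2
  rw [← mk_ends (ε : Sym2 V)] at h
  exact h

lemma adj_inl_inl (u v : V) : ¬ (Subdiv F 1).Adj (Sum.inl u) (Sum.inl v) := by
  rintro ⟨-, h | h⟩ <;> exact h

lemma adj_inr_inr (p q : F.edgeSet × Fin 1) : ¬ (Subdiv F 1).Adj (Sum.inr p) (Sum.inr q) := by
  obtain ⟨e, i⟩ := p; obtain ⟨f, j⟩ := q
  rintro ⟨-, ⟨-, h⟩ | ⟨-, h⟩⟩ <;> omega

lemma adj_inl_inr (u : V) (ε : F.edgeSet) (i : Fin 1) :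
    (Subdiv F 1).Adj (Sum.inl u) (Sum.inr (ε, i)) ↔
      u = (ends (ε : Sym2 V)).1 ∨ u = (ends (ε : Sym2 V)).2 := by
  constructor
  · rintro ⟨-, ⟨⟨-, h⟩ | ⟨-, h⟩⟩ | h⟩
    · exact Or.inl h
    · exact Or.inr h
    · exact absurd h (by rintro h; exact h)
  · intro h
    refine ⟨by simp, Or.inl ?_⟩
    rcases h with h | h
    · exact Or.inl ⟨by omega, h⟩
    · exact Or.inr ⟨by omega, h⟩

/-! ### Connectivity of the subdivision -/

lemma reach_step {u v : V} (h : F.Adj u v) :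
    (Subdiv F 1).Reachable (Sum.inl u) (Sum.inl v) := by
  set ε : F.edgeSet := ⟨s(u, v), h⟩ with hε
  have hse := mk_ends (s(u, v) : Sym2 V)
  rw [Sym2.eq_iff] at hse
  have h1 : (Subdiv F 1).Adj (Sum.inl u) (Sum.inr (ε, 0)) := by
    rw [adj_inl_inr]
    rcases hse with ⟨h1, -⟩ | ⟨-, h2⟩
    · exact Or.inl h1.symm
    · exact Or.inr h2.symm
  have h2 : (Subdiv F 1).Adj (Sum.inl v) (Sum.inr (ε, 0)) := by
    rw [adj_inl_inr]
    rcases hse with ⟨-, h2⟩ | ⟨h1, -⟩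
    · exact Or.inr h2.symm
    · exact Or.inl h1.symm
  exact h1.reachable.trans h2.symm.reachable

lemma reach_inl {u v : V} (h : F.Reachable u v) :
    (Subdiv F 1).Reachable (Sum.inl u) (Sum.inl v) := by
  obtain ⟨p⟩ := h
  induction p with
  | nil => exact SimpleGraph.Reachable.refl _
  | @cons a c b hadj q ih => exact (reach_step F hadj).trans ih

lemma subdiv_connected (hF : F.Connected) : (Subdiv F 1).Connected := by
  haveI : Nonempty (V ⊕ (F.edgeSet × Fin 1)) := ⟨Sum.inl hF.nonempty.some⟩
  constructor
  intro x y
  have key : ∀ z : V ⊕ (F.edgeSet × Fin 1), ∃ u : V, (Subdiv F 1).Reachable z (Sum.inl u) := by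
    intro z
    match z with
    | Sum.inl u => exact ⟨u, SimpleGraph.Reachable.refl _⟩
    | Sum.inr (ε, i) =>
      refine ⟨(ends (ε : Sym2 V)).1, SimpleGraph.Adj.reachable ?_⟩
      exact ((adj_inl_inr F _ ε i).2 (Or.inl rfl)).symm
  obtain ⟨u, hu⟩ := key x
  obtain ⟨v, hv⟩ := key y
  exact (hu.trans (reach_inl F (hF u v))).trans hv.symm

/-! ### Degrees in the subdivision -/

variable [Fintype V]

lemma deg_inl (u : V) : (Subdiv F 1).degree (Sum.inl u) = F.degree u := by
  symm
  unfold SimpleGraph.degree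
  apply Finset.card_bij
    (fun w hw => (Sum.inr (⟨s(u, w), by simpa using hw⟩, 0) : V ⊕ (F.edgeSet × Fin 1)))
  · intro w hw
    rw [SimpleGraph.mem_neighborFinset]
    rw [adj_inl_inr]
    have h := mk_ends (s(u, w) : Sym2 V)
    rw [Sym2.eq_iff] at h
    rcases h with ⟨h1, h2⟩ | ⟨h1, h2⟩
    · exact Or.inl h1.symm
    · exact Or.inr h2.symm
  · intro w hw w' hw' h
    simp only [Sum.inr.injEq, Prod.mk.injEq, Subtype.mk.injEq] at h
    exact (Sym2.congr_right.1 h.1)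
  · intro b hb
    rw [SimpleGraph.mem_neighborFinset] at hb
    match b, hb with
    | Sum.inl v, hb => exact absurd hb (adj_inl_inl F u v)
    | Sum.inr (ε, i), hb =>
      rw [adj_inl_inr] at hb
      have hadj := ends_adj F ε
      have hi : i = 0 := Subsingleton.elim _ _
      rcases hb with h | h
      · refine ⟨(ends (ε : Sym2 V)).2, ?_, ?_⟩
        · rw [SimpleGraph.mem_neighborFinset]; rw [h]; exact hadj
        · subst hi
          congr 1
          refine Prod.ext ?_ rfl
          refine Subtype.ext ?_
          show s(u, _) = (ε : Sym2 V)
          rw [h, mk_ends]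
      · refine ⟨(ends (ε : Sym2 V)).1, ?_, ?_⟩
        · rw [SimpleGraph.mem_neighborFinset]; rw [h]; exact hadj.symm
        · subst hi
          congr 1
          refine Prod.ext ?_ rfl
          refine Subtype.ext ?_
          show s(u, _) = (ε : Sym2 V)
          rw [h, Sym2.eq_swap, mk_ends]

lemma deg_inr (p : F.edgeSet × Fin 1) : (Subdiv F 1).degree (Sum.inr p) = 2 := by
  obtain ⟨ε, i⟩ := p
  have hne := (ends_adj F ε).ne
  have : (Subdiv F 1).neighborFinset (Sum.inr (ε, i)) =
      {Sum.inl (ends (ε : Sym2 V)).1, Sum.inl (ends (ε : Sym2 V)).2} := by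
    ext y
    rw [SimpleGraph.mem_neighborFinset]
    match y with
    | Sum.inl u =>
      rw [SimpleGraph.adj_comm, adj_inl_inr]
      simp [eq_comm]
    | Sum.inr q =>
      simp only [Finset.mem_insert, Finset.mem_singleton]
      constructor
      · intro h; exact absurd h (adj_inr_inr F _ _)
      · rintro (h | h) <;> exact absurd h (by simp)
  rw [SimpleGraph.degree, this]
  rw [Finset.card_insert_of_notMem (by simpa using hne), Finset.card_singleton]

/-! ### Edges of the subdivision -/

noncomputable def Pe (ε : F.edgeSet) : Sym2 (V ⊕ (F.edgeSet × Fin 1)) :=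
  s(Sum.inl (ends (ε : Sym2 V)).1, Sum.inr (ε, 0))

noncomputable def Qe (ε : F.edgeSet) : Sym2 (V ⊕ (F.edgeSet × Fin 1)) :=
  s(Sum.inl (ends (ε : Sym2 V)).2, Sum.inr (ε, 0))

lemma Pe_mem (ε : F.edgeSet) : Pe F ε ∈ (Subdiv F 1).edgeFinset := by
  rw [SimpleGraph.mem_edgeFinset, Pe, SimpleGraph.mem_edgeSet, adj_inl_inr]
  exact Or.inl rfl

lemma Qe_mem (ε : F.edgeSet) : Qe F ε ∈ (Subdiv F 1).edgeFinset := by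
  rw [SimpleGraph.mem_edgeFinset, Qe, SimpleGraph.mem_edgeSet, adj_inl_inr]
  exact Or.inr rfl

lemma Pe_inj : Function.Injective (Pe F) := by
  intro ε ε' h
  rw [Pe, Pe, Sym2.eq_iff] at h
  rcases h with ⟨-, h⟩ | ⟨h, -⟩
  · exact ((Prod.ext_iff.1 (Sum.inr.inj h)).1)
  · exact absurd h (by simp)

lemma Qe_inj : Function.Injective (Qe F) := by
  intro ε ε' h
  rw [Qe, Qe, Sym2.eq_iff] at h
  rcases h with ⟨-, h⟩ | ⟨h, -⟩
  · exact ((Prod.ext_iff.1 (Sum.inr.inj h)).1)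
  · exact absurd h (by simp)

lemma PQ_disj : Disjoint (Finset.univ.image (Pe F)) (Finset.univ.image (Qe F)) := by
  rw [Finset.disjoint_left]
  rintro x hx hy
  simp only [Finset.mem_image, Finset.mem_univ, true_and] at hx hy
  obtain ⟨ε, rfl⟩ := hx
  obtain ⟨ε', h⟩ := hy
  rw [Qe, Pe, Sym2.eq_iff] at h
  rcases h with ⟨h1, h2⟩ | ⟨h1, -⟩
  · obtain rfl : ε' = ε := (Prod.ext_iff.1 (Sum.inr.inj h2)).1
    exact (ends_adj F _).ne (Sum.inl.inj h1).symm
  · exact absurd h1 (by simp)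

lemma edgeFinset_subdiv :
    (Subdiv F 1).edgeFinset = (Finset.univ.image (Pe F)) ∪ (Finset.univ.image (Qe F)) := by
  ext e
  constructor
  · intro he
    rw [SimpleGraph.mem_edgeFinset] at he
    induction e with
    | _ x y =>
      rw [SimpleGraph.mem_edgeSet] at he
      simp only [Finset.mem_union, Finset.mem_image, Finset.mem_univ, true_and]
      match x, y, he with
      | Sum.inl u, Sum.inl v, he => exact absurd he (adj_inl_inl F u v)
      | Sum.inr p, Sum.inr q, he => exact absurd he (adj_inr_inr F p q)
      | Sum.inl u, Sum.inr (ε, i), he =>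
        rw [adj_inl_inr] at he
        have hi : i = 0 := Subsingleton.elim _ _
        subst hi
        rcases he with h | h
        · exact Or.inl ⟨ε, by rw [Pe, h]⟩
        · exact Or.inr ⟨ε, by rw [Qe, h]⟩
      | Sum.inr (ε, i), Sum.inl u, he =>
        rw [SimpleGraph.adj_comm, adj_inl_inr] at he
        have hi : i = 0 := Subsingleton.elim _ _
        subst hi
        rcases he with h | h
        · exact Or.inl ⟨ε, by rw [Pe, h, Sym2.eq_swap]⟩
        · exact Or.inr ⟨ε, by rw [Qe, h, Sym2.eq_swap]⟩
  · intro he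
    simp only [Finset.mem_union, Finset.mem_image, Finset.mem_univ, true_and] at he
    rcases he with ⟨ε, rfl⟩ | ⟨ε, rfl⟩
    · exact Pe_mem F ε
    · exact Qe_mem F ε

lemma sum_edge_subdiv (g : Sym2 (V ⊕ (F.edgeSet × Fin 1)) → ℕ) :
    ∑ e ∈ (Subdiv F 1).edgeFinset, g e = ∑ ε : F.edgeSet, (g (Pe F ε) + g (Qe F ε)) := by
  rw [edgeFinset_subdiv, Finset.sum_union (PQ_disj F),
    Finset.sum_image (fun a _ b _ h => Pe_inj F h),
    Finset.sum_image (fun a _ b _ h => Qe_inj F h), ← Finset.sum_add_distrib]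

lemma card_edge_subdiv : m (Subdiv F 1) = 2 * m F := by
  rw [m, edgeFinset_subdiv, Finset.card_union_of_disjoint (PQ_disj F),
    Finset.card_image_of_injective _ (Pe_inj F),
    Finset.card_image_of_injective _ (Qe_inj F), Finset.card_univ, m,
    SimpleGraph.edgeFinset, Set.toFinset_card]
  ring

/-! ### Weighted handshake identity -/

lemma sum_lift_add (G : SimpleGraph V) (f : V → ℕ) :
    ∑ e ∈ G.edgeFinset, Sym2.lift ⟨fun u v => f u + f v, fun _ _ => Nat.add_comm _ _⟩ e
      = ∑ v, G.degree v * f v := by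
  classical
  have h1 : ∑ d : G.Dart, f d.toProd.1 = ∑ v, G.degree v * f v := by
    rw [← Finset.sum_fiberwise_of_maps_to (g := fun d : G.Dart => d.toProd.1)
      (fun d _ => Finset.mem_univ _) (fun d => f d.toProd.1)]
    refine Finset.sum_congr rfl fun v _ => ?_
    have hcongr : ∀ d ∈ Finset.univ.filter (fun d : G.Dart => d.toProd.1 = v),
        f d.toProd.1 = f v := fun d hd => by rw [(Finset.mem_filter.1 hd).2]
    rw [Finset.sum_congr rfl hcongr, Finset.sum_const, smul_eq_mul,
      ← G.dart_fst_fiber_card_eq_degree v]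
  have h2 : ∑ d : G.Dart, f d.toProd.1
      = ∑ e ∈ G.edgeFinset, Sym2.lift ⟨fun u v => f u + f v, fun _ _ => Nat.add_comm _ _⟩ e := by
    rw [← Finset.sum_fiberwise_of_maps_to (g := fun d : G.Dart => d.edge)
      (fun d _ => SimpleGraph.mem_edgeFinset.2 d.edge_mem) (fun d => f d.toProd.1)]
    refine Finset.sum_congr rfl fun e he => ?_
    induction e with
    | _ u w =>
      have hadj : G.Adj u w := (SimpleGraph.mem_edgeFinset.1 he)
      have hf : Finset.univ.filter (fun d' : G.Dart => d'.edge = s(u, w))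
          = {(⟨(u, w), hadj⟩ : G.Dart), (⟨(u, w), hadj⟩ : G.Dart).symm} := by
        convert SimpleGraph.Dart.edge_fiber (⟨(u, w), hadj⟩ : G.Dart)
        rfl
      rw [hf, Finset.sum_pair (⟨(u, w), hadj⟩ : G.Dart).symm_ne.symm]
      rfl
  rw [← h2, h1]

/-! ### Trees -/

lemma ncard_edgeSet (G : SimpleGraph V) (i : Fintype G.edgeSet) :
    G.edgeSet.ncard = (@edgeFinset V G i).card := Set.ncard_eq_toFinset_card' _

lemma reachable_in_delete {G : SimpleGraph V} {v w : V}
    (h : (G \ fromEdgeSet {s(v, w)}).Reachable v w) :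
    ∀ {a b : V}, G.Reachable a b → (G \ fromEdgeSet {s(v, w)}).Reachable a b := by
  intro a b hab
  obtain ⟨p⟩ := hab
  induction p with
  | nil => exact Reachable.refl _
  | @cons a c b hadj q ih =>
    refine Reachable.trans ?_ ih
    by_cases he : s(a, c) = s(v, w)
    · rw [Sym2.eq_iff] at he
      rcases he with ⟨rfl, rfl⟩ | ⟨rfl, rfl⟩
      · exact h
      · exact h.symm
    · exact Adj.reachable (by
        rw [sdiff_adj, fromEdgeSet_adj]
        exact ⟨hadj, fun hh => he hh.1⟩)

lemma edgeSet_delete {G : SimpleGraph V} {x y : V} (h : G.Adj x y) :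
    (G \ fromEdgeSet {s(x, y)}).edgeSet = G.edgeSet \ {s(x, y)} := by
  rw [edgeSet_sdiff, edgeSet_fromEdgeSet, edgeSet_sdiff_sdiff_isDiag]

lemma cycle_edges_ne_nil {G : SimpleGraph V} {v : V} {c : G.Walk v v} (hc : c.IsCycle) :
    c.edges ≠ [] := by
  have h3 := hc.three_le_length
  intro hnil
  have := c.length_edges
  rw [hnil] at this
  simp at this
  omega

lemma conn_card_le : ∀ (k : ℕ) (G : SimpleGraph V), G.Connected →
    G.edgeSet.ncard = k → Fintype.card V ≤ k + 1 := by
  intro k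
  induction k using Nat.strong_induction_on with
  | _ k ih =>
    intro G hG hk
    by_cases hac : G.IsAcyclic
    · have := IsTree.card_edgeFinset ⟨hG, hac⟩
      rw [← ncard_edgeSet] at this
      omega
    · rw [IsAcyclic] at hac
      push_neg at hac
      obtain ⟨v, c, hc⟩ := hac
      obtain ⟨e, he⟩ := List.exists_mem_of_ne_nil _ (cycle_edges_ne_nil hc)
      induction e with
      | _ x y =>
        obtain ⟨hadj, hreach⟩ := adj_and_reachable_delete_edges_iff_exists_cycle.mpr ⟨v, c, hc, he⟩
        haveI := hG.nonempty
        have hconn : (G \ fromEdgeSet {s(x, y)}).Connected :=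
          ⟨fun a b => reachable_in_delete hreach (hG a b)⟩
        have hmem : s(x, y) ∈ G.edgeSet := hadj
        have hcard : (G \ fromEdgeSet {s(x, y)}).edgeSet.ncard = k - 1 := by
          rw [edgeSet_delete hadj, Set.ncard_diff_singleton_of_mem hmem, hk]
        have hk1 : 1 ≤ k := by
          rw [← hk]
          exact (Set.ncard_pos (G.edgeSet.toFinite)).2 ⟨_, hmem⟩
        have := ih (k - 1) (by omega) _ hconn hcard
        omega

lemma isTree_of_connected_card (G : SimpleGraph V) (hG : G.Connected)
    (h : G.edgeSet.ncard + 1 = Fintype.card V) : G.IsTree := by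
  refine ⟨hG, ?_⟩
  intro v c hc
  obtain ⟨e, he⟩ := List.exists_mem_of_ne_nil _ (cycle_edges_ne_nil hc)
  induction e with
  | _ x y =>
    obtain ⟨hadj, hreach⟩ := adj_and_reachable_delete_edges_iff_exists_cycle.mpr ⟨v, c, hc, he⟩
    haveI := hG.nonempty
    have hconn : (G \ fromEdgeSet {s(x, y)}).Connected :=
      ⟨fun a b => reachable_in_delete hreach (hG a b)⟩
    have hmem : s(x, y) ∈ G.edgeSet := hadj
    have hcard : (G \ fromEdgeSet {s(x, y)}).edgeSet.ncard = G.edgeSet.ncard - 1 := by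
      rw [edgeSet_delete hadj, Set.ncard_diff_singleton_of_mem hmem]
    have hpos : 1 ≤ G.edgeSet.ncard :=
      (Set.ncard_pos (G.edgeSet.toFinite)).2 ⟨_, hmem⟩
    have := conn_card_le _ _ hconn hcard
    omega

end Aux17

open Aux17

theorem stmt_17 {V : Type*} [Fintype V] (F : SimpleGraph V) (n : ℕ)
    (hcard : Fintype.card V = n) (hn : 4 ≤ n) (htree : F.IsTree)
    (c : V) (hc : F.degree c = 3) (hother : ∀ v, v ≠ c → F.degree v ≤ 2) :
    ds F = 4 * (n - 1) ∧
      (Subdiv F 1).IsTree ∧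
      Fintype.card (V ⊕ (F.edgeSet × Fin 1)) = 2 * n - 1 ∧
      4 * m (Subdiv F 1) * dd (Subdiv F 1) = (ds (Subdiv F 1)) ^ 2 := by
  have hm : F.edgeFinset.card + 1 = Fintype.card V := htree.card_edgeFinset
  rw [hcard] at hm
  have hEF : F.edgeFinset.card = n - 1 := by omega
  have hEcard : Fintype.card F.edgeSet = n - 1 := by
    rw [← hEF, SimpleGraph.edgeFinset, Set.toFinset_card]
  -- positivity of degrees
  have hpos : ∀ v : V, 0 < F.degree v := by
    intro v
    rw [F.degree_pos_iff_exists_adj]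
    have h2 : 1 < Fintype.card V := by omega
    obtain ⟨w, hw⟩ := Fintype.exists_ne_of_one_lt_card h2 v
    obtain ⟨p⟩ := htree.isConnected v w
    cases p with
    | nil => exact absurd rfl hw
    | cons hadj q => exact ⟨_, hadj⟩
  -- ds F = 4 (n-1)
  have hds2 : ds F = ∑ v, F.degree v * F.degree v := sum_lift_add F (fun v => F.degree v)
  have hsplit : ∑ v, F.degree v * F.degree v
      = F.degree c * F.degree c + ∑ v ∈ Finset.univ.erase c, F.degree v * F.degree v :=
    (Finset.add_sum_erase _ _ (Finset.mem_univ c)).symm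
  have hsplit2 : ∑ v, F.degree v = F.degree c + ∑ v ∈ Finset.univ.erase c, F.degree v :=
    (Finset.add_sum_erase _ _ (Finset.mem_univ c)).symm
  have hdegsum : ∑ v, F.degree v = 2 * (n - 1) := by
    rw [F.sum_degrees_eq_twice_card_edges, hEF]
  have hbound : ∀ v ∈ Finset.univ.erase c, F.degree v * F.degree v + 2 = 3 * F.degree v := by
    intro v hv
    have h1 := hpos v
    have h2 := hother v (Finset.mem_erase.1 hv).1
    have : F.degree v = 1 ∨ F.degree v = 2 := by omega
    rcases this with h | h <;> rw [h]
  have hkey := Finset.sum_congr rfl hbound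
  rw [Finset.sum_add_distrib, Finset.sum_const, ← Finset.mul_sum,
    Finset.card_erase_of_mem (Finset.mem_univ c), Finset.card_univ, hcard, smul_eq_mul] at hkey
  have hds : ds F = 4 * (n - 1) := by
    rw [hds2, hsplit, hc]
    omega
  -- number of edges and vertices of the subdivision
  have hm1 : m (Subdiv F 1) = 2 * (n - 1) := by
    rw [card_edge_subdiv F]
    unfold m
    omega
  have hcards : Fintype.card (V ⊕ (F.edgeSet × Fin 1)) = 2 * n - 1 := by
    rw [Fintype.card_sum, Fintype.card_prod, Fintype.card_fin, hcard, hEcard]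
    omega
  -- tree
  have htree1 : (Subdiv F 1).IsTree := by
    apply isTree_of_connected_card _ (subdiv_connected F htree.isConnected)
    have : (Subdiv F 1).edgeSet.ncard = m (Subdiv F 1) := by
      rw [ncard_edgeSet _ _]; rfl
    rw [this, hm1, hcards]
    omega
  -- the key sum S
  have hS : ∑ ε : F.edgeSet, (F.degree (ends (ε : Sym2 V)).1 + F.degree (ends (ε : Sym2 V)).2)
      = ds F := by
    rw [Finset.sum_set_coe
      (f := fun e => F.degree (ends (e : Sym2 V)).1 + F.degree (ends (e : Sym2 V)).2)]
    unfold ds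
    refine Finset.sum_congr rfl fun e he => ?_
    conv_rhs => rw [← mk_ends e]
    rfl
  -- dd of subdivision
  have hdd : dd (Subdiv F 1) = 8 * (n - 1) := by
    unfold dd
    rw [sum_edge_subdiv F]
    have : ∀ ε : F.edgeSet,
        (Sym2.lift ⟨fun u v => (Subdiv F 1).degree u * (Subdiv F 1).degree v,
          fun _ _ => Nat.mul_comm _ _⟩ (Pe F ε)
        + Sym2.lift ⟨fun u v => (Subdiv F 1).degree u * (Subdiv F 1).degree v,
          fun _ _ => Nat.mul_comm _ _⟩ (Qe F ε))
        = 2 * (F.degree (ends (ε : Sym2 V)).1 + F.degree (ends (ε : Sym2 V)).2) := by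
      intro ε
      rw [Pe, Qe, Sym2.lift_mk, Sym2.lift_mk]
      show (Subdiv F 1).degree (Sum.inl (ends (ε : Sym2 V)).1) * (Subdiv F 1).degree (Sum.inr (ε, 0))
        + (Subdiv F 1).degree (Sum.inl (ends (ε : Sym2 V)).2) * (Subdiv F 1).degree (Sum.inr (ε, 0)) = _
      rw [deg_inl, deg_inl, deg_inr]
      ring
    rw [Finset.sum_congr rfl fun ε _ => this ε, ← Finset.mul_sum, hS, hds]
    ring
  -- ds of subdivision
  have hds1 : ds (Subdiv F 1) = 8 * (n - 1) := by
    unfold ds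
    rw [sum_edge_subdiv F]
    have : ∀ ε : F.edgeSet,
        (Sym2.lift ⟨fun u v => (Subdiv F 1).degree u + (Subdiv F 1).degree v,
          fun _ _ => Nat.add_comm _ _⟩ (Pe F ε)
        + Sym2.lift ⟨fun u v => (Subdiv F 1).degree u + (Subdiv F 1).degree v,
          fun _ _ => Nat.add_comm _ _⟩ (Qe F ε))
        = (F.degree (ends (ε : Sym2 V)).1 + F.degree (ends (ε : Sym2 V)).2) + 4 := by
      intro ε
      rw [Pe, Qe, Sym2.lift_mk, Sym2.lift_mk]
      show (Subdiv F 1).degree (Sum.inl (ends (ε : Sym2 V)).1) + (Subdiv F 1).degree (Sum.inr (ε, 0))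
        + ((Subdiv F 1).degree (Sum.inl (ends (ε : Sym2 V)).2) + (Subdiv F 1).degree (Sum.inr (ε, 0))) = _
      rw [deg_inl, deg_inl, deg_inr]
      ring
    rw [Finset.sum_congr rfl fun ε _ => this ε, Finset.sum_add_distrib, hS, hds,
      Finset.sum_const, Finset.card_univ, hEcard, smul_eq_mul]
    ring
  refine ⟨hds, htree1, hcards, ?_⟩
  rw [hm1, hdd, hds1]
  ring
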